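/- Let R > 0, let c = −4 coth²(R/2) log cosh(R/2), and define u : (0, R] → ℝ by u(r) = 2(log cosh(r/2))² − 2(log cosh(R/2))² + Li₂(tanh²(r/2)) − Li₂(tanh²(R/2)) + c·log( cosh(r/2)/cosh(R/2) ). Then 2π ∫₀^R u(r) sinh r dr = 4π ( sinh²(R/2) − 4 coth²(R/2) (log cosh(R/2))² ). -/

import Mathlib

open MeasureTheory Real

/-- The dilogarithm, defined for real `x ≤ 1` by `Li₂(x) = −∫₀ˣ log(1−t)/t dt`. -/
noncomputable def Li2 (x : ℝ) : ℝ := - ∫ t in (0:ℝ)..x, Real.log (1 - t) / t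

namespace Stmt16Aux

noncomputable def li2f (t : ℝ) : ℝ := Real.log (1 - t) / t

lemma li2f_measurable : Measurable li2f :=
  (Real.measurable_log.comp (measurable_const.sub measurable_id)).div measurable_id

lemma li2f_integrableOn {b : ℝ} (hb0 : 0 ≤ b) (hb : b < 1) :
    IntegrableOn li2f (Set.Icc 0 b) := by
  have h1b : (0:ℝ) < 1 - b := by linarith
  refine Integrable.mono' (g := fun _ => 1 / (1 - b))
    (integrableOn_const measure_Icc_lt_top.ne)
    li2f_measurable.aestronglyMeasurable ?_
  rw [ae_restrict_iff' measurableSet_Icc]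
  refine Filter.Eventually.of_forall fun t ht => ?_
  obtain ⟨ht0, htb⟩ := ht
  rw [Real.norm_eq_abs]
  rcases eq_or_lt_of_le ht0 with h | h
  · have : li2f t = 0 := by simp [li2f, ← h]
    rw [this, abs_zero]
    exact div_nonneg (by norm_num) h1b.le
  · have h1t : (0:ℝ) < 1 - t := by linarith
    have hlog : Real.log (1 - t) ≤ 0 := Real.log_nonpos (by linarith) (by linarith)
    rw [li2f, abs_div, abs_of_pos h, abs_of_nonpos hlog, div_le_iff₀ h]
    have key : -Real.log (1 - t) ≤ t / (1 - t) := by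
      have h2 := Real.log_le_sub_one_of_pos (inv_pos.2 h1t)
      rw [Real.log_inv] at h2
      have h3 : (1 - t)⁻¹ - 1 = t / (1 - t) := by field_simp; ring
      linarith
    have h2 : t / (1 - t) ≤ t / (1 - b) := by gcongr <;> linarith
    calc -Real.log (1 - t) ≤ t / (1 - b) := key.trans h2
      _ = 1 / (1 - b) * t := by field_simp

lemma li2f_intervalIntegrable {x : ℝ} (hx0 : 0 ≤ x) (hx : x < 1) :
    IntervalIntegrable li2f volume 0 x := by
  rw [intervalIntegrable_iff_integrableOn_Icc_of_le hx0]
  exact li2f_integrableOn hx0 hx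

lemma li2_hasDerivAt {x : ℝ} (hx0 : 0 < x) (hx : x < 1) :
    HasDerivAt Li2 (-(Real.log (1 - x) / x)) x := by
  have h : HasDerivAt (fun y => ∫ t in (0:ℝ)..y, li2f t) (li2f x) x := by
    refine intervalIntegral.integral_hasDerivAt_right
      (li2f_intervalIntegrable hx0.le hx)
      li2f_measurable.stronglyMeasurable.stronglyMeasurableAtFilter ?_
    have hnum : ContinuousAt (fun t : ℝ => Real.log (1 - t)) x := by
      have h := Real.continuousAt_log (x := 1 - x) (by linarith)
      exact h.comp ((continuous_const.sub continuous_id).continuousAt)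
    exact hnum.div continuousAt_id hx0.ne'
  exact h.neg

lemma li2_continuousOn {b : ℝ} (hb0 : 0 ≤ b) (hb : b < 1) :
    ContinuousOn Li2 (Set.Icc 0 b) := by
  have : ContinuousOn (fun x => ∫ t in (0:ℝ)..x, li2f t) (Set.Icc 0 b) := by
    have := intervalIntegral.continuousOn_primitive_interval
      (a := 0) (b := b) (f := li2f) (μ := volume) (by
        rw [Set.uIcc_of_le hb0]; exact li2f_integrableOn hb0 hb)
    rwa [Set.uIcc_of_le hb0] at this
  exact this.neg

lemma li2_zero : Li2 0 = 0 := by simp [Li2]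

/-- shorthand -/
noncomputable def L (r : ℝ) : ℝ := Real.log (Real.cosh (r / 2))

lemma one_sub_tanh_sq (x : ℝ) : 1 - Real.tanh x ^ 2 = 1 / Real.cosh x ^ 2 := by
  have h := Real.cosh_sq_sub_sinh_sq x
  have hc : Real.cosh x ≠ 0 := (Real.cosh_pos x).ne'
  rw [Real.tanh_eq_sinh_div_cosh, div_pow]
  field_simp
  exact h

lemma L_hasDerivAt (r : ℝ) : HasDerivAt L (Real.tanh (r/2) / 2) r := by
  have h1 : HasDerivAt (fun s : ℝ => s / 2) (1 / 2) r := (hasDerivAt_id r).div_const 2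
  have h2 : HasDerivAt (fun s : ℝ => Real.cosh (s / 2)) (Real.sinh (r/2) * (1/2)) r :=
    by have := (Real.hasDerivAt_cosh (r/2)).comp r h1; exact this
  have h3 := h2.log (Real.cosh_pos (r/2)).ne'
  convert h3 using 1
  · rfl
  · rw [Real.tanh_eq_sinh_div_cosh]; ring

lemma tanh_hasDerivAt (r : ℝ) :
    HasDerivAt (fun s : ℝ => Real.tanh (s/2)) ((1 - Real.tanh (r/2)^2) / 2) r := by
  have h1 : HasDerivAt (fun s : ℝ => s / 2) (1 / 2) r := (hasDerivAt_id r).div_const 2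
  have hs : HasDerivAt (fun s : ℝ => Real.sinh (s / 2)) (Real.cosh (r/2) * (1/2)) r :=
    by have := (Real.hasDerivAt_sinh (r/2)).comp r h1; exact this
  have hcsh : HasDerivAt (fun s : ℝ => Real.cosh (s / 2)) (Real.sinh (r/2) * (1/2)) r :=
    by have := (Real.hasDerivAt_cosh (r/2)).comp r h1; exact this
  have hne : Real.cosh (r/2) ≠ 0 := (Real.cosh_pos (r/2)).ne'
  have hd := hs.div hcsh hne
  have heq : ((fun s : ℝ => Real.sinh (s/2)) / fun s : ℝ => Real.cosh (s/2)) = fun s : ℝ => Real.tanh (s/2) := by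
    funext s; rw [Real.tanh_eq_sinh_div_cosh]; rfl
  rw [heq] at hd
  refine hd.congr_deriv (Eq.symm ?_)
  have hc2 : Real.cosh (r/2)^2 - Real.sinh (r/2)^2 = 1 := Real.cosh_sq_sub_sinh_sq (r/2)
  rw [one_sub_tanh_sq]
  field_simp
  linear_combination (-1 : ℝ) * hc2

lemma tanh_sq_hasDerivAt (r : ℝ) :
    HasDerivAt (fun s : ℝ => (Real.tanh (s/2))^2)
      (Real.tanh (r/2) * (1 - Real.tanh (r/2)^2)) r := by
  have := (tanh_hasDerivAt r).fun_pow 2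
  refine this.congr_deriv (Eq.symm ?_)
  ring

lemma tanh_lt_one (x : ℝ) : Real.tanh x < 1 := by
  have h : Real.cosh x - Real.sinh x = Real.exp (-x) := by
    rw [Real.cosh_eq, Real.sinh_eq]; ring
  have h2 : Real.sinh x < Real.cosh x := by
    have := Real.exp_pos (-x); linarith
  rw [Real.tanh_eq_sinh_div_cosh, div_lt_one (Real.cosh_pos x)]
  exact h2

lemma tanh_nonneg {x : ℝ} (hx : 0 ≤ x) : 0 ≤ Real.tanh x := by
  rw [Real.tanh_eq_sinh_div_cosh]
  exact div_nonneg (by rwa [Real.sinh_nonneg_iff]) (Real.cosh_pos x).le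

lemma tanh_mono {x y : ℝ} (h : x ≤ y) : Real.tanh x ≤ Real.tanh y := by
  rw [Real.tanh_eq_sinh_div_cosh, Real.tanh_eq_sinh_div_cosh,
    div_le_div_iff₀ (Real.cosh_pos x) (Real.cosh_pos y)]
  have key : Real.sinh y * Real.cosh x - Real.sinh x * Real.cosh y = Real.sinh (y - x) := by
    rw [Real.sinh_sub]; ring
  have h2 : 0 ≤ Real.sinh (y - x) := Real.sinh_nonneg_iff.2 (by linarith)
  linarith

/-- The antiderivative. -/
noncomputable def F (c K : ℝ) (r : ℝ) : ℝ :=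
  2 * ((Real.cosh r - 1) * (L r)^2 - (Real.cosh r - 1) * L r + (Real.cosh r - 1)/2
      - 2 * L r + 2 * (L r)^2)
  + K * (Real.cosh r - 1)
  + ((Real.cosh r - 1) * Li2 ((Real.tanh (r/2))^2) - 4 * (L r)^2)
  + c * ((Real.cosh r - 1) * L r - (Real.cosh r - 1)/2 + 2 * L r)

lemma F_hasDerivAt (c K : ℝ) {r : ℝ} (hr : 0 < r) :
    HasDerivAt (F c K)
      ((2 * (L r)^2 + K + Li2 ((Real.tanh (r/2))^2) + c * L r) * Real.sinh r) r := by
  have hC : HasDerivAt (fun s : ℝ => Real.cosh s - 1) (Real.sinh r) r :=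
    (Real.hasDerivAt_cosh r).sub_const 1
  have hL := L_hasDerivAt r
  have hL2 : HasDerivAt (fun s => (L s)^2) (2 * L r * (Real.tanh (r/2)/2)) r := by
    have := hL.fun_pow 2; refine this.congr_deriv (Eq.symm ?_); ring
  -- derivative of Li2 (tanh(s/2)^2)
  have hsh : 0 < Real.sinh (r/2) := Real.sinh_pos_iff.2 (by linarith)
  have hch : 0 < Real.cosh (r/2) := Real.cosh_pos (r/2)
  have hT0 : 0 < Real.tanh (r/2) := by
    rw [Real.tanh_eq_sinh_div_cosh]; exact div_pos hsh hch
  have hT1 : Real.tanh (r/2) < 1 := Stmt16Aux.tanh_lt_one _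
  have hx0 : 0 < (Real.tanh (r/2))^2 := by positivity
  have hx1 : (Real.tanh (r/2))^2 < 1 := by nlinarith
  have hLi2 : HasDerivAt (fun s => Li2 ((Real.tanh (s/2))^2))
      (-(Real.log (1 - (Real.tanh (r/2))^2) / (Real.tanh (r/2))^2)
        * (Real.tanh (r/2) * (1 - Real.tanh (r/2)^2))) r :=
    by have := (li2_hasDerivAt hx0 hx1).comp r (tanh_sq_hasDerivAt r); exact this
  -- assemble
  have H := ((((hC.mul hL2).sub (hC.mul hL)).add (hC.div_const 2)).sub
      (hL.const_mul 2)).add (hL2.const_mul 2)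
  have H1 := H.const_mul 2
  have H2 := hC.const_mul K
  have H3 := (hC.mul hLi2).sub ((hL2.const_mul 4))
  have H4 := (((hC.mul hL).sub (hC.div_const 2)).add (hL.const_mul 2)).const_mul c
  have Htot := ((H1.add H2).add H3).add H4
  have hFeq : F c K = fun r =>
      2 * ((Real.cosh r - 1) * (L r)^2 - (Real.cosh r - 1) * L r + (Real.cosh r - 1)/2
        - 2 * L r + 2 * (L r)^2)
      + K * (Real.cosh r - 1)
      + ((Real.cosh r - 1) * Li2 ((Real.tanh (r/2))^2) - 4 * (L r)^2)
      + c * ((Real.cosh r - 1) * L r - (Real.cosh r - 1)/2 + 2 * L r) := rfl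
  rw [hFeq]
  refine Htot.congr_deriv (Eq.symm ?_)
  -- now an identity in real numbers
  have hlog : Real.log (1 - (Real.tanh (r/2))^2) = -2 * L r := by
    rw [one_sub_tanh_sq, one_div, Real.log_inv, Real.log_pow, L]
    push_cast
    ring
  have hsinh : Real.sinh r = 2 * Real.sinh (r/2) * Real.cosh (r/2) := by
    have := Real.sinh_two_mul (r/2)
    rw [show 2 * (r/2) = r by ring] at this
    rw [this]
  have hcosh : Real.cosh r = Real.cosh (r/2)^2 + Real.sinh (r/2)^2 := by
    have := Real.cosh_two_mul (r/2)
    rw [show 2 * (r/2) = r by ring] at this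
    rw [this]
  have hsq : Real.cosh (r/2)^2 - Real.sinh (r/2)^2 = 1 := Real.cosh_sq_sub_sinh_sq _
  rw [hlog, hsinh, hcosh, Real.tanh_eq_sinh_div_cosh]
  field_simp
  linear_combination (c * Real.sinh (r/2)^2 - 2 * Real.sinh (r/2)^2
    - 4 * L r * Real.cosh (r/2)^2) * hsq

end Stmt16Aux

open Stmt16Aux in
/-- Maximal mean deflection on a hyperbolic geodesic disk: the integral in geodesic
polar coordinates of the clamped-plate deflection `u` over the disk of radius `R`
in the hyperbolic plane equals `4π(sinh²(R/2) − 4coth²(R/2)(log cosh(R/2))²)`. -/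
theorem stmt_16 (R : ℝ) (hR0 : 0 < R)
    (c : ℝ) (hc : c = -4 * (Real.cosh (R/2) / Real.sinh (R/2))^2 * Real.log (Real.cosh (R/2)))
    (u : ℝ → ℝ)
    (hu : ∀ r, u r = 2 * (Real.log (Real.cosh (r/2)))^2 - 2 * (Real.log (Real.cosh (R/2)))^2
        + Li2 ((Real.tanh (r/2))^2) - Li2 ((Real.tanh (R/2))^2)
        + c * Real.log (Real.cosh (r/2) / Real.cosh (R/2))) :
    2 * π * ∫ r in (0:ℝ)..R, u r * Real.sinh r
      = 4 * π * ((Real.sinh (R/2))^2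
          - 4 * (Real.cosh (R/2) / Real.sinh (R/2))^2 * (Real.log (Real.cosh (R/2)))^2) := by
  set K : ℝ := -2 * (L R)^2 - Li2 ((Real.tanh (R/2))^2) - c * L R with hK
  -- the nice form of u
  have hu' : ∀ r, u r = 2 * (L r)^2 + K + Li2 ((Real.tanh (r/2))^2) + c * L r := by
    intro r
    rw [hu r, hK]
    unfold L
    rw [Real.log_div (Real.cosh_pos _).ne' (Real.cosh_pos _).ne']
    ring
  -- continuity of r ↦ Li2 (tanh(r/2)^2) on [0, R]
  have hb0 : (0:ℝ) ≤ (Real.tanh (R/2))^2 := sq_nonneg _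
  have hb1 : (Real.tanh (R/2))^2 < 1 := by
    have h1 := Stmt16Aux.tanh_lt_one (R/2)
    have h0 := tanh_nonneg (le_of_lt (by linarith : (0:ℝ) < R/2))
    nlinarith
  have hmaps : Set.MapsTo (fun r => (Real.tanh (r/2))^2) (Set.Icc 0 R)
      (Set.Icc 0 ((Real.tanh (R/2))^2)) := by
    intro r hr
    constructor
    · positivity
    · have h0 : 0 ≤ Real.tanh (r/2) := tanh_nonneg (by linarith [hr.1])
      have h1 : Real.tanh (r/2) ≤ Real.tanh (R/2) := tanh_mono (by linarith [hr.2])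
      nlinarith
  have hLi2cont : ContinuousOn (fun r => Li2 ((Real.tanh (r/2))^2)) (Set.Icc 0 R) := by
    refine (li2_continuousOn hb0 hb1).comp ?_ hmaps
    have htanh : Continuous Real.tanh := by
      have : Real.tanh = fun x => Real.sinh x / Real.cosh x := by
        funext x; exact Real.tanh_eq_sinh_div_cosh x
      rw [this]
      exact Real.continuous_sinh.div Real.continuous_cosh fun x => (Real.cosh_pos x).ne'
    exact ((htanh.comp (continuous_id.div_const 2)).pow 2).continuousOn
  have hLcont : Continuous L := by
    have h1 : Continuous fun r : ℝ => Real.cosh (r / 2) :=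
      Real.continuous_cosh.comp (continuous_id.div_const 2)
    rw [continuous_iff_continuousAt]
    intro r
    exact ContinuousAt.comp (Real.continuousAt_log (Real.cosh_pos (r/2)).ne') h1.continuousAt
  -- integrand is continuous
  have hucont : ContinuousOn (fun r => u r * Real.sinh r) (Set.Icc 0 R) := by
    have hu3 : ContinuousOn u (Set.Icc 0 R) := by
      refine ContinuousOn.congr ?_ (fun r _ => hu' r)
      exact (((continuous_const.mul (hLcont.pow 2)).continuousOn.add continuousOn_const).add
        hLi2cont).add (continuous_const.mul hLcont).continuousOn
    exact hu3.mul Real.continuous_sinh.continuousOn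
  have huIcc : Set.uIcc (0:ℝ) R = Set.Icc 0 R := Set.uIcc_of_le hR0.le
  have hInt : IntervalIntegrable (fun r => u r * Real.sinh r) volume 0 R :=
    (huIcc ▸ hucont).intervalIntegrable
  -- the antiderivative is continuous
  have hCc : Continuous fun r : ℝ => Real.cosh r - 1 := Real.continuous_cosh.sub continuous_const
  have hFcont : ContinuousOn (F c K) (Set.Icc 0 R) := by
    have h1 : ContinuousOn (fun r => (Real.cosh r - 1) * Li2 ((Real.tanh (r/2))^2)
        - 4 * (L r)^2) (Set.Icc 0 R) :=
      (hCc.continuousOn.mul hLi2cont).sub (continuous_const.mul (hLcont.pow 2)).continuousOn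
    have h2 : Continuous fun r => 2 * ((Real.cosh r - 1) * (L r)^2 - (Real.cosh r - 1) * L r
        + (Real.cosh r - 1)/2 - 2 * L r + 2 * (L r)^2) := by
      exact continuous_const.mul (((((hCc.mul (hLcont.pow 2)).sub (hCc.mul hLcont)).add
        (hCc.div_const 2)).sub (continuous_const.mul hLcont)).add
        (continuous_const.mul (hLcont.pow 2)))
    have h3 : Continuous fun r : ℝ => K * (Real.cosh r - 1) := continuous_const.mul hCc
    have h4 : Continuous fun r => c * ((Real.cosh r - 1) * L r - (Real.cosh r - 1)/2
        + 2 * L r) := by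
      exact continuous_const.mul
        (((hCc.mul hLcont).sub (hCc.div_const 2)).add (continuous_const.mul hLcont))
    exact ((h2.continuousOn.add h3.continuousOn).add h1).add h4.continuousOn
  -- derivative on the open interval
  have hderiv : ∀ x ∈ Set.Ioo 0 R,
      HasDerivWithinAt (F c K) (u x * Real.sinh x) (Set.Ioi x) x := by
    intro x hx
    have h := F_hasDerivAt c K hx.1
    rw [hu' x]
    exact h.hasDerivWithinAt
  have key := intervalIntegral.integral_eq_sub_of_hasDeriv_right_of_le hR0.le hFcont hderiv hInt
  rw [key]
  -- value at 0
  have hF0 : F c K 0 = 0 := by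
    have hL0 : L 0 = 0 := by
      unfold L
      norm_num
    unfold F
    rw [hL0]
    norm_num [Real.tanh_zero, li2_zero]
  rw [hF0, sub_zero]
  -- final algebra
  have hsh : 0 < Real.sinh (R/2) := Real.sinh_pos_iff.2 (by linarith)
  have hch2 : Real.cosh (R/2)^2 = 1 + Real.sinh (R/2)^2 := Real.cosh_sq' (R/2)
  have hC2 : Real.cosh R - 1 = 2 * Real.sinh (R/2)^2 := by
    have h := Real.cosh_two_mul (R/2)
    rw [show 2 * (R/2) = R by ring] at h
    rw [h]; linarith
  have hLR : L R = Real.log (Real.cosh (R/2)) := rfl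
  unfold F
  rw [hC2, hK, hc, hLR]
  field_simp
  linear_combination (8 * Real.sinh (R/2)^2 * Real.log (Real.cosh (R/2))) * hch2
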